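/- arXiv:1605.07867 — 5 statements merged into one kernel-verified Lean document; each statement's English description precedes it below -/
import Mathlib

section
/- Let G be a group such that for all a, b ∈ G, either C(a) ∩ C(b) has finite index in C(a) or finite index in C(b), and assume C(a) is infinite for every a ∈ G. Then for every finite list a₀, …, a_{n−1} of elements of G, the intersection C(a₀) ∩ ⋯ ∩ C(a_{n−1}) is infinite. -/
open Subgroup

private lemma key_relIndex {G : Type*} [Group G]
    (h : ∀ a b : G,
      Finite ((Subgroup.centralizer {a}) ⧸
        ((Subgroup.centralizer {a} ⊓ Subgroup.centralizer {b}).subgroupOf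
          (Subgroup.centralizer {a}))) ∨
      Finite ((Subgroup.centralizer {b}) ⧸
        ((Subgroup.centralizer {a} ⊓ Subgroup.centralizer {b}).subgroupOf
          (Subgroup.centralizer {b})))) :
    ∀ s : Finset G, s.Nonempty →
      ∃ a ∈ s, (⨅ b ∈ s, Subgroup.centralizer {b} : Subgroup G).relIndex
        (Subgroup.centralizer {a}) ≠ 0 := by
  intro s hs
  induction hs using Finset.Nonempty.cons_induction with
  | singleton a =>
      refine ⟨a, Finset.mem_singleton_self a, ?_⟩
      simp [Subgroup.relIndex_self]
  | cons a t hat ht ih =>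
      obtain ⟨b, hb, hrel⟩ := ih
      have hbt : (⨅ c ∈ t, Subgroup.centralizer {c} : Subgroup G) ≤
          Subgroup.centralizer {b} := by
        exact iInf_le_of_le b (iInf_le _ hb)
      have hK : (⨅ c ∈ Finset.cons a t hat, Subgroup.centralizer {c} : Subgroup G) =
          Subgroup.centralizer {a} ⊓ (⨅ c ∈ t, Subgroup.centralizer {c}) := by
        simp [Finset.mem_cons, iInf_or, iInf_inf_eq]
      set Kt := (⨅ c ∈ t, Subgroup.centralizer {c} : Subgroup G) with hKt
      rcases h a b with hfin | hfin
      · -- (C a ⊓ C b) has finite index in C a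
        have h1 : (Subgroup.centralizer {a} ⊓ Subgroup.centralizer {b}).relIndex
            (Subgroup.centralizer {a}) ≠ 0 := Subgroup.index_ne_zero_of_finite
        refine ⟨a, Finset.mem_cons_self a t, ?_⟩
        rw [hK, Subgroup.inf_relIndex_left]
        have h2 : Kt.relIndex (Subgroup.centralizer {a} ⊓ Subgroup.centralizer {b}) ≠ 0 :=
          fun hz => hrel (Subgroup.relIndex_eq_zero_of_le_right inf_le_right hz)
        exact Subgroup.relIndex_ne_zero_trans h2 h1
      · -- (C a ⊓ C b) has finite index in C b
        have h1 : (Subgroup.centralizer {a} ⊓ Subgroup.centralizer {b}).relIndex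
            (Subgroup.centralizer {b}) ≠ 0 := Subgroup.index_ne_zero_of_finite
        refine ⟨b, Finset.mem_cons_of_mem hb, ?_⟩
        rw [hK]
        have h2 : ((Subgroup.centralizer {a} ⊓ Subgroup.centralizer {b}) ⊓ Kt).relIndex
            (Subgroup.centralizer {b}) ≠ 0 :=
          Subgroup.relIndex_inf_ne_zero h1 hrel
        have hle : (Subgroup.centralizer {a} ⊓ Subgroup.centralizer {b}) ⊓ Kt ≤
            Subgroup.centralizer {a} ⊓ Kt :=
          inf_le_inf_right Kt inf_le_left
        intro hz
        exact h2 (Subgroup.relIndex_eq_zero_of_le_left hle hz)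

theorem finite_inter_centralizers_infinite {G : Type*} [Group G]
    (h : ∀ a b : G,
      Finite ((Subgroup.centralizer {a}) ⧸
        ((Subgroup.centralizer {a} ⊓ Subgroup.centralizer {b}).subgroupOf
          (Subgroup.centralizer {a}))) ∨
      Finite ((Subgroup.centralizer {b}) ⧸
        ((Subgroup.centralizer {a} ⊓ Subgroup.centralizer {b}).subgroupOf
          (Subgroup.centralizer {b}))))
    (hinf : ∀ a : G, Infinite (Subgroup.centralizer {a})) :
    ∀ s : Finset G, Infinite (⨅ a ∈ s, Subgroup.centralizer {a} : Subgroup G) := by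
  intro s
  rcases s.eq_empty_or_nonempty with rfl | hs
  · have : Infinite G := Infinite.of_injective _ (Subgroup.centralizer {(1 : G)}).subtype_injective
    simp only [Finset.notMem_empty, iInf_false, iInf_top]
    exact Infinite.of_injective _ Subgroup.topEquiv.symm.injective
  · obtain ⟨a, ha, hrel⟩ := key_relIndex h s hs
    set K := (⨅ b ∈ s, Subgroup.centralizer {b} : Subgroup G) with hK
    have hle : K ≤ Subgroup.centralizer {a} := iInf_le_of_le a (iInf_le _ ha)
    -- K has finite index in the infinite group C a, hence infinite
    by_contra hfin
    rw [not_infinite_iff_finite] at hfin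
    have hcard : Nat.card K ≠ 0 := Nat.card_ne_zero.2 ⟨One.instNonempty, hfin⟩
    have hcardsub : Nat.card (K.subgroupOf (Subgroup.centralizer {a})) = Nat.card K := by
      exact Nat.card_congr (Subgroup.subgroupOfEquivOfLe hle).toEquiv
    have hCa : Nat.card (Subgroup.centralizer {a}) = 0 :=
      @Nat.card_eq_zero_of_infinite _ (hinf a)
    have := Subgroup.card_mul_index (K.subgroupOf (Subgroup.centralizer {a}))
    rw [hcardsub, hCa] at this
    exact mul_ne_zero hcard hrel this
end

section
/- Let H be a group, n and N positive natural numbers, and (K_i)_{i ∈ S} a family of subgroups of H, each of index less than n in H, with the property that for every finite subset F ⊆ S there exists a subset F₀ ⊆ F with |F₀| ≤ N such that ⋂_{i ∈ F} K_i = ⋂_{i ∈ F₀} K_i. Then the intersection ⋂_{i ∈ S} K_i equals ⋂_{i ∈ F₀} K_i for some subset F₀ ⊆ S of size at most N; in particular it has index less than n^N in H. -/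
theorem baldwin_saxl_intersection {H : Type*} [Group H] {S : Type*} [Nonempty S]
    (n N : ℕ) (hn : 0 < n) (hN : 0 < N) (K : S → Subgroup H)
    (hidx : ∀ i : S, Cardinal.mk (H ⧸ K i) < n)
    (hBS : ∀ F : Finset S, ∃ F₀ ⊆ F, F₀.card ≤ N ∧ (⨅ i ∈ F, K i) = ⨅ i ∈ F₀, K i) :
    ∃ F₀ : Finset S, F₀.card ≤ N ∧ (⨅ i, K i) = (⨅ i ∈ F₀, K i) ∧
      Cardinal.mk (H ⧸ (⨅ i, K i)) < (n : Cardinal) ^ N := by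
  classical
  have haleph : ∀ i : S, Cardinal.mk (H ⧸ K i) < Cardinal.aleph0 :=
    fun i => (hidx i).trans (Cardinal.nat_lt_aleph0 n)
  have hfinQ : ∀ i : S, Finite (H ⧸ K i) := fun i => Cardinal.mk_lt_aleph0_iff.mp (haleph i)
  have hfin : ∀ i : S, (K i).FiniteIndex := fun i =>
    @Subgroup.finiteIndex_of_finite_quotient _ _ _ (hfinQ i)
  have hlt : ∀ i : S, (K i).index < n := by
    intro i
    have h1 : ((K i).index : Cardinal) = Cardinal.mk (H ⧸ K i) := by
      rw [Subgroup.index_eq_card, Nat.card]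
      exact Cardinal.cast_toNat_of_lt_aleph0 (haleph i)
    have h2 : ((K i).index : Cardinal) < (n : Cardinal) := h1 ▸ hidx i
    exact_mod_cast h2
  -- n ≥ 2
  obtain ⟨i₀⟩ := ‹Nonempty S›
  have hn2 : 2 ≤ n := by
    have h0 : (K i₀).index ≠ 0 := (hfin i₀).index_ne_zero
    have h1 := hlt i₀
    omega
  -- every finset-infimum has finite index
  have hFI : ∀ F : Finset S, (⨅ i ∈ F, K i).FiniteIndex := fun F =>
    Subgroup.finiteIndex_iInf' _ (fun i _ => hfin i)
  -- index bound for small finsets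
  have hbound : ∀ F : Finset S, F.card ≤ N → (⨅ i ∈ F, K i).index ≤ (n - 1) ^ N := by
    intro F hF
    have h1 : (⨅ i ∈ F, K i) = ⨅ i : F, K i := by
      rw [iInf_subtype]
    have h2 : (⨅ i : F, K i).index ≤ ∏ i : F, (K i).index := Subgroup.index_iInf_le _
    have h3 : ∏ i : F, (K i).index ≤ ∏ _i : F, (n - 1) := by
      apply Finset.prod_le_prod
      · intro i _; exact Nat.zero_le _
      · intro i _; have := hlt i; omega
    have h4 : ∏ _i : F, (n - 1) = (n - 1) ^ F.card := by
      rw [Finset.prod_const, Finset.card_univ, Fintype.card_coe]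
    have h5 : (n - 1) ^ F.card ≤ (n - 1) ^ N :=
      Nat.pow_le_pow_right (by omega) hF
    rw [h1]; omega
  -- pick F₀ with maximal index among small finsets
  set V : Set ℕ := (fun F : Finset S => (⨅ i ∈ F, K i).index) '' {F | F.card ≤ N} with hV
  have hVne : V.Nonempty := ⟨(⨅ i ∈ (∅ : Finset S), K i).index, ⟨∅, by simp, rfl⟩⟩
  have hVbdd : BddAbove V := by
    refine ⟨(n - 1) ^ N, ?_⟩
    rintro m ⟨F, hF, rfl⟩
    exact hbound F hF
  have hmem := Nat.sSup_mem hVne hVbdd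
  obtain ⟨F₀, hF₀card, hF₀eq⟩ := hmem
  simp only [Set.mem_setOf_eq] at hF₀card
  have hmax : ∀ F : Finset S, F.card ≤ N → (⨅ i ∈ F, K i).index ≤ (⨅ i ∈ F₀, K i).index := by
    intro F hF
    have hF₀eq' : (⨅ i ∈ F₀, K i).index = sSup V := hF₀eq
    rw [hF₀eq']
    exact le_csSup hVbdd ⟨F, hF, rfl⟩
  -- key: ⨅ F₀ ≤ K j for all j
  have hkey : ∀ j : S, (⨅ i ∈ F₀, K i) ≤ K j := by
    intro j
    set F : Finset S := insert j F₀ with hFdef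
    obtain ⟨F₁, hsub, hcard, heq⟩ := hBS F
    have hle : (⨅ i ∈ F, K i) ≤ ⨅ i ∈ F₀, K i := by
      refine le_iInf fun i => le_iInf fun hi => ?_
      exact iInf_le_of_le i (iInf_le_of_le (Finset.mem_insert_of_mem hi) le_rfl)
    have hge_idx : (⨅ i ∈ F₀, K i).index ≤ (⨅ i ∈ F, K i).index := by
      have := hFI F
      exact Subgroup.index_antitone hle
    have hle_idx : (⨅ i ∈ F, K i).index ≤ (⨅ i ∈ F₀, K i).index := by
      rw [heq]; exact hmax F₁ hcard
    have hEq : (⨅ i ∈ F, K i) = ⨅ i ∈ F₀, K i := by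
      by_contra hne
      have hstrict : (⨅ i ∈ F, K i) < ⨅ i ∈ F₀, K i := lt_of_le_of_ne hle hne
      have := hFI F
      have := Subgroup.index_strictAnti hstrict
      omega
    calc (⨅ i ∈ F₀, K i) = ⨅ i ∈ F, K i := hEq.symm
      _ ≤ K j := iInf_le_of_le j (iInf_le_of_le (Finset.mem_insert_self j F₀) le_rfl)
  have hmain : (⨅ i, K i) = ⨅ i ∈ F₀, K i := by
    apply le_antisymm
    · exact le_iInf fun i => le_iInf fun _ => iInf_le K i
    · exact le_iInf hkey
  refine ⟨F₀, hF₀card, hmain, ?_⟩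
  -- cardinality bound
  have hFI₀ : (⨅ i, K i).FiniteIndex := hmain ▸ hFI F₀
  have hQfin : Finite (H ⧸ (⨅ i, K i)) := Subgroup.finite_quotient_of_finiteIndex
  have hidx_lt : (⨅ i, K i).index < n ^ N := by
    have h1 : (⨅ i, K i).index ≤ (n - 1) ^ N := by
      rw [hmain]; exact hbound F₀ hF₀card
    have h2 : (n - 1) ^ N < n ^ N := Nat.pow_lt_pow_left (by omega) (by omega)
    omega
  have hcast : Cardinal.mk (H ⧸ (⨅ i, K i)) = ((⨅ i, K i).index : Cardinal) := by
    rw [Subgroup.index_eq_card, Nat.card]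
    exact (Cardinal.cast_toNat_of_lt_aleph0 (Cardinal.mk_lt_aleph0_iff.mpr hQfin)).symm
  rw [hcast]
  have : ((n : Cardinal) : Cardinal) ^ N = ((n ^ N : ℕ) : Cardinal) := by push_cast; ring
  rw [this]
  exact_mod_cast hidx_lt
end

section
/- Let G be a group and suppose there is a function assigning to each a ∈ G a subgroup C⁰(a) ≤ C(a) (where C(a) is the centralizer of a), together with a natural number K such that [C(a) : C⁰(a)] < K for all a. Then there is no sequence (a_n)_{n<ω} of elements of G satisfying: (i) a_{n+1} ∈ C⁰(a_n) for all n; (ii) C⁰(a_{n+1}) ≤ C⁰(a_n) for all n; (iii) a_n ∉ C⁰(a_n) for all n. -/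
theorem no_descending_sequence {G : Type*} [Group G]
    (C0 : G → Subgroup G) (hle : ∀ a : G, C0 a ≤ Subgroup.centralizer {a})
    (K : ℕ)
    (hK : ∀ a : G, Cardinal.mk ((Subgroup.centralizer {a}) ⧸
        ((C0 a).subgroupOf (Subgroup.centralizer {a}))) < K) :
    ¬ ∃ a : ℕ → G,
      (∀ n : ℕ, a (n + 1) ∈ C0 (a n)) ∧
      (∀ n : ℕ, C0 (a (n + 1)) ≤ C0 (a n)) ∧
      (∀ n : ℕ, a n ∉ C0 (a n)) := by
  rintro ⟨a, h1, h2, h3⟩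
  -- chain: C0 (a m) ≤ C0 (a n) for n ≤ m
  have hchain : ∀ n m : ℕ, n ≤ m → C0 (a m) ≤ C0 (a n) := by
    intro n m hnm
    induction m, hnm using Nat.le_induction with
    | base => exact le_rfl
    | succ m hnm ih => exact (h2 m).trans ih
  -- membership: a m ∈ C0 (a n) for n < m
  have hmem : ∀ n m : ℕ, n < m → a m ∈ C0 (a n) := by
    intro n m hnm
    obtain ⟨k, rfl⟩ := Nat.exists_eq_add_of_lt hnm
    exact hchain n (n + k) (Nat.le_add_right n k) (h1 (n + k))
  -- each a i (i < K) lies in the centralizer of a K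
  have hcent : ∀ i : ℕ, i < K → a i ∈ Subgroup.centralizer {a K} := by
    intro i hi
    rw [Subgroup.mem_centralizer_singleton_iff]
    have := hle (a i) (hmem i K hi)
    rw [Subgroup.mem_centralizer_singleton_iff] at this
    exact this.symm
  set H := Subgroup.centralizer {a K} with hH
  set S := (C0 (a K)).subgroupOf H with hS
  let f : Fin K → H ⧸ S := fun i => QuotientGroup.mk ⟨a i, hcent i i.2⟩
  have hninj : ¬ Function.Injective f := by
    intro hinj
    have h4 := Cardinal.lift_mk_le'.mpr ⟨⟨f, hinj⟩⟩
    have h5 := Cardinal.lift_lt.mpr (hK (a K))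
    rw [Cardinal.lift_natCast] at h5
    simp only [Cardinal.mk_fin, Cardinal.lift_natCast] at h4
    exact absurd (h4.trans_lt h5) (lt_irrefl _)
  obtain ⟨i, j, hfij, hij⟩ := Function.not_injective_iff.mp hninj
  -- wlog we have i' < j' with f i' = f j'
  have key : ∀ i j : Fin K, (i : ℕ) < j → f i = f j → False := by
    intro i j hlt hf
    have hq : (⟨a i, hcent i i.2⟩ : H)⁻¹ * ⟨a j, hcent j j.2⟩ ∈ S :=
      (QuotientGroup.eq (s := S)).mp hf
    rw [hS, Subgroup.mem_subgroupOf] at hq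
    have hq' : (a i)⁻¹ * a j ∈ C0 (a i) :=
      hchain i K (le_of_lt i.2) hq
    have hji : a j ∈ C0 (a i) := hmem i j hlt
    have : a i ∈ C0 (a i) := by
      have := mul_mem hji (inv_mem hq')
      simpa [mul_assoc] using this
    exact h3 i this
  rcases lt_or_gt_of_ne (fun h => hij (by exact_mod_cast Fin.ext h)) with h | h
  · exact key i j h hfij
  · exact key j i h hfij.symm
end

section
/- Let G be a group having no proper subgroup of finite index. If Z(G) is finite, then the quotient G / Z(G) has trivial center. -/
theorem quotient_by_center_centerless {G : Type*} [Group G]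
    (hfi : ∀ H : Subgroup G, Finite (G ⧸ H) → H = ⊤)
    (hZ : Finite (Subgroup.center G)) :
    Subgroup.center (G ⧸ Subgroup.center G) = ⊥ := by
  rw [Subgroup.eq_bot_iff_forall]
  intro x hx
  induction x using QuotientGroup.induction_on with
  | H g =>
  rw [Subgroup.mem_center_iff] at hx
  set Z := Subgroup.center G with hZdef
  -- commutator map into the center
  have hc : ∀ h : G, g⁻¹ * h⁻¹ * g * h ∈ Z := by
    intro h
    have := hx (QuotientGroup.mk h)
    rw [← QuotientGroup.mk_mul, ← QuotientGroup.mk_mul, QuotientGroup.eq] at this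
    simpa [mul_assoc] using this
  set C := Subgroup.centralizer ({g} : Set G) with hC
  have hmemC : ∀ k : G, k ∈ C ↔ g * k = k * g := by
    intro k
    rw [hC, Subgroup.mem_centralizer_singleton_iff]
    constructor <;> (intro h; exact h.symm)
  have key : Finite (G ⧸ C) := by
    -- the map h ↦ [g⁻¹, h⁻¹] descends to an injection G ⧸ C ↪ Z
    have hwd : ∀ h1 h2 : G, h1⁻¹ * h2 ∈ C →
        g⁻¹ * h1⁻¹ * g * h1 = g⁻¹ * h2⁻¹ * g * h2 := by
      intro h1 h2 hk
      set c1 := g⁻¹ * h1⁻¹ * g * h1 with hc1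
      set k := h1⁻¹ * h2 with hk2
      have hkg : g * k = k * g := (hmemC k).1 hk
      have hcomm : ∀ a : G, a * c1 = c1 * a :=
        fun a => Subgroup.mem_center_iff.1 (hc h1) a
      have e1 : h1⁻¹ * g * h1 = g * c1 := by rw [hc1]; group
      have h2eq : h2 = h1 * k := by rw [hk2]; group
      have : h2⁻¹ * g * h2 = g * c1 :=
        calc h2⁻¹ * g * h2 = k⁻¹ * (h1⁻¹ * g * h1) * k := by rw [h2eq]; group
          _ = k⁻¹ * (g * c1) * k := by rw [e1]
          _ = k⁻¹ * g * (c1 * k) := by group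
          _ = k⁻¹ * g * (k * c1) := by rw [← hcomm]
          _ = k⁻¹ * (g * k) * c1 := by group
          _ = k⁻¹ * (k * g) * c1 := by rw [hkg]
          _ = g * c1 := by group
      calc g⁻¹ * h1⁻¹ * g * h1 = g⁻¹ * (h1⁻¹ * g * h1) := by group
        _ = g⁻¹ * (g * c1) := by rw [e1]
        _ = g⁻¹ * (h2⁻¹ * g * h2) := by rw [this]
        _ = g⁻¹ * h2⁻¹ * g * h2 := by group
    let F : G ⧸ C → Z := fun q => Quotient.liftOn' q (fun h => (⟨_, hc h⟩ : Z))
      (by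
        intro h1 h2 hrel
        have hmem : h1⁻¹ * h2 ∈ C := QuotientGroup.leftRel_apply.mp hrel
        exact Subtype.ext (hwd h1 h2 hmem))
    have hFinj : Function.Injective F := by
      intro q1 q2 heq
      induction q1 using QuotientGroup.induction_on with
      | H h1 =>
      induction q2 using QuotientGroup.induction_on with
      | H h2 =>
      have heq' : g⁻¹ * h1⁻¹ * g * h1 = g⁻¹ * h2⁻¹ * g * h2 := congrArg Subtype.val heq
      rw [QuotientGroup.eq, hmemC]
      set c1 := g⁻¹ * h1⁻¹ * g * h1 with hc1
      set k := h1⁻¹ * h2 with hk2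
      have hcomm : ∀ a : G, a * c1 = c1 * a :=
        fun a => Subgroup.mem_center_iff.1 (hc h1) a
      have e1 : h1⁻¹ * g = g * c1 * h1⁻¹ := by rw [hc1]; group
      have e2 : h2⁻¹ * g * h2 = g * c1 := by
        rw [heq']; group
      have e3 : h2 * g = g * h2 * c1⁻¹ := by
        have : g * h2 * c1⁻¹ = h2 * (h2⁻¹ * g * h2) * c1⁻¹ := by group
        rw [this, e2]; group
      symm
      calc k * g = h1⁻¹ * (h2 * g) := by rw [hk2]; group
        _ = h1⁻¹ * (g * h2 * c1⁻¹) := by rw [e3]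
        _ = (h1⁻¹ * g) * h2 * c1⁻¹ := by group
        _ = (g * c1 * h1⁻¹) * h2 * c1⁻¹ := by rw [e1]
        _ = g * (c1 * k) * c1⁻¹ := by rw [hk2]; group
        _ = g * (k * c1) * c1⁻¹ := by rw [hcomm]
        _ = g * k := by group
    exact Finite.of_injective F hFinj
  have hCtop : C = ⊤ := hfi C key
  have hg : g ∈ Z := by
    rw [hZdef, Subgroup.mem_center_iff]
    intro a
    have ha : a ∈ C := hCtop ▸ Subgroup.mem_top a
    exact ((hmemC a).1 ha).symm
  rwa [← QuotientGroup.eq_one_iff g] at hg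
end

section
/- Let F be a finite group with trivial center, X a topological space, s ⊆ X a clopen set, and g ∈ F. Let f_s ∈ C(X, F) be as above (g on s, identity off s). If f' belongs to the double centralizer C(C(f_s)) inside C(X, F), then f'(x) = e for all x ∉ s. -/
instance discreteTopologicalGroup {F : Type*} [Group F] [TopologicalSpace F]
    [DiscreteTopology F] : IsTopologicalGroup F where
  continuous_mul := continuous_of_discreteTopology
  continuous_inv := continuous_of_discreteTopology

open Classical in
lemma clopen_indicator_continuous {F : Type*} [TopologicalSpace F]
    {X : Type*} [TopologicalSpace X] {s : Set X} (hs : IsClopen s) (g h : F) :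
    Continuous (fun x : X => if x ∈ s then g else h) := by
  apply continuous_if (p := fun x => x ∈ s)
    (fun a ha => absurd (show a ∈ frontier s from ha) (by simp [hs.frontier_eq]))
    continuousOn_const continuousOn_const

open Classical in
theorem double_centralizer_vanishes_off {F : Type*} [Group F] [Finite F] [TopologicalSpace F]
    [DiscreteTopology F] (hZ : Subgroup.center F = ⊥)
    {X : Type*} [TopologicalSpace X] (s : Set X) (hs : IsClopen s) (g : F) :
    ∃ hc : Continuous (fun x : X => if x ∈ s then g else (1 : F)),
      ∀ f' ∈ Subgroup.centralizer
          ((Subgroup.centralizer {(⟨_, hc⟩ : C(X, F))} : Subgroup C(X, F)) : Set C(X, F)),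
        ∀ x : X, x ∉ s → f' x = 1 := by
  refine ⟨clopen_indicator_continuous hs g 1, ?_⟩
  intro f' hf' x hx
  -- f' x commutes with every h ∈ F
  have hcomm : ∀ h : F, h * f' x = f' x * h := by
    intro h
    set k : C(X, F) := ⟨fun y => if y ∈ s then 1 else h,
      clopen_indicator_continuous hs 1 h⟩ with hk
    have hkmem : k ∈ (Subgroup.centralizer
        {(⟨_, clopen_indicator_continuous hs g 1⟩ : C(X, F))} : Subgroup C(X, F)) := by
      rw [Subgroup.mem_centralizer_iff]
      intro m hm
      rw [Set.mem_singleton_iff] at hm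
      subst hm
      ext y
      simp only [ContinuousMap.mul_apply, hk, ContinuousMap.coe_mk]
      by_cases hy : y ∈ s <;> simp [hy]
    have := (Subgroup.mem_centralizer_iff.mp hf') k hkmem
    have := congrArg (fun (m : C(X, F)) => m x) this
    simpa [hk, hx] using this
  have : f' x ∈ Subgroup.center F := Subgroup.mem_center_iff.mpr hcomm
  rw [hZ] at this
  exact this
end
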